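/- Let F be a field, D a finite-dimensional central division algebra over F, and E/F a quadratic field extension. If there exists no F-algebra homomorphism from E into D, then the E-algebra D ⊗_F E is a division algebra. -/

import Mathlib

open scoped TensorProduct

/-- Let `D` be a finite-dimensional central division algebra over a field
`F`, and `E/F` a quadratic field extension. If there is no `F`-algebra homomorphism
`E → D`, then `D ⊗_F E` is a division algebra (every nonzero element is invertible). -/
theorem stmt4 {F D E : Type*} [Field F] [DivisionRing D] [Algebra F D]
    [FiniteDimensional F D]
    (hcentral : ∀ d : D, (∀ x : D, d * x = x * d) → ∃ a : F, algebraMap F D a = d)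
    [Field E] [Algebra F E] (hE : Module.finrank F E = 2)
    (hemb : IsEmpty (E →ₐ[F] D)) :
    ∀ x : D ⊗[F] E, x ≠ 0 → IsUnit x := by
  intro x hx
  by_contra hxu
  haveI : FiniteDimensional F E := Module.finite_of_finrank_eq_succ hE
  -- key identity: D-scalar action is left multiplication by `d ⊗ 1`
  have hsmul : ∀ (d : D) (y : D ⊗[F] E), d • y = (d ⊗ₜ[F] (1 : E)) * y := by
    intro d y
    induction y using TensorProduct.induction_on with
    | zero => simp
    | tmul a b =>
        rw [TensorProduct.smul_tmul', Algebra.TensorProduct.tmul_mul_tmul, smul_eq_mul, one_mul]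
    | add a b ha hb => rw [smul_add, mul_add, ha, hb]
  -- `1 ⊗ e` commutes with the D-action
  have hcomm : ∀ (e : E) (d : D) (y : D ⊗[F] E),
      ((1 : D) ⊗ₜ[F] e) * (d • y) = d • (((1 : D) ⊗ₜ[F] e) * y) := by
    intro e d y
    rw [hsmul, hsmul, ← mul_assoc, ← mul_assoc, Algebra.TensorProduct.tmul_mul_tmul,
      Algebra.TensorProduct.tmul_mul_tmul, one_mul, mul_one, mul_one, one_mul]
  -- the left ideal `A * x` as a D-submodule
  let f : D ⊗[F] E →ₗ[D] D ⊗[F] E :=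
    { toFun := fun a => a * x
      map_add' := fun a b => add_mul a b x
      map_smul' := fun d a => by simp only [RingHom.id_apply, hsmul, mul_assoc] }
  set M := LinearMap.range f with hM
  have hxM : x ∈ M := ⟨1, one_mul x⟩
  -- M ≠ ⊤ (otherwise x would be a unit)
  have hMtop : M ≠ ⊤ := by
    intro h
    have h1 : (1 : D ⊗[F] E) ∈ M := h ▸ Submodule.mem_top
    obtain ⟨a, ha⟩ := h1
    have ha : a * x = 1 := ha
    -- right multiplication by x as an F-linear endomorphism
    let g : D ⊗[F] E →ₗ[F] D ⊗[F] E :=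
      { toFun := fun y => y * x
        map_add' := fun y z => add_mul y z x
        map_smul' := fun c y => smul_mul_assoc c y x }
    have hsurj : Function.Surjective g := by
      intro z
      exact ⟨z * a, by simpa [g, mul_assoc, ha] using rfl⟩
    have hinj : Function.Injective g := (LinearMap.injective_iff_surjective).2 hsurj
    have : x * a = 1 := by
      apply hinj
      show (x * a) * x = 1 * x
      rw [mul_assoc, ha, mul_one, one_mul]
    exact hxu ⟨⟨x, a, this, ha⟩, rfl⟩
  -- dimension count: finrank D (D ⊗ E) = 2
  let b := Module.finBasis F E
  let bb := Algebra.TensorProduct.basis D b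
  haveI : Module.Finite D (D ⊗[F] E) := Module.Finite.of_basis bb
  have hdim : Module.finrank D (D ⊗[F] E) = 2 := by
    rw [Module.finrank_eq_card_basis bb, Fintype.card_fin, hE]
  have hlt : Module.finrank D M < 2 := hdim ▸ Submodule.finrank_lt hMtop
  have hpos : 0 < Module.finrank D M := by
    have : Nontrivial M := ⟨⟨⟨x, hxM⟩, 0, by simpa using hx⟩⟩
    exact Module.finrank_pos
  have hone : Module.finrank D M = 1 := by omega
  obtain ⟨v, hv0, hvspan⟩ := finrank_eq_one_iff'.1 hone
  -- transfer to the ambient algebra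
  have hv0' : (v : D ⊗[F] E) ≠ 0 := fun h => hv0 (Subtype.ext h)
  have hspan : ∀ w ∈ M, ∃ c : D, c • (v : D ⊗[F] E) = w := by
    intro w hw
    obtain ⟨c, hc⟩ := hvspan ⟨w, hw⟩
    exact ⟨c, congrArg Subtype.val hc⟩
  have hinj : ∀ c c' : D, c • (v : D ⊗[F] E) = c' • (v : D ⊗[F] E) → c = c' := by
    intro c c' h
    by_contra hne
    have h2 : (c - c') • (v : D ⊗[F] E) = 0 := by rw [sub_smul, h, sub_self]
    have : (v : D ⊗[F] E) = 0 := by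
      have := congrArg (fun y => (c - c')⁻¹ • y) h2
      simpa [smul_smul, inv_mul_cancel₀ (sub_ne_zero.2 hne)] using this
    exact hv0' this
  -- M is stable under left multiplication by `1 ⊗ e`
  have hcl : ∀ (e : E) (w : D ⊗[F] E), w ∈ M → ((1 : D) ⊗ₜ[F] e) * w ∈ M := by
    intro e w hw
    obtain ⟨a, ha⟩ := hw
    refine ⟨((1 : D) ⊗ₜ[F] e) * a, ?_⟩
    have ha' : a * x = w := ha
    show ((1 : D) ⊗ₜ[F] e) * a * x = ((1 : D) ⊗ₜ[F] e) * w
    rw [mul_assoc, ha']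
  -- define the embedding E → D
  have hg : ∀ e : E, ∃ c : D, c • (v : D ⊗[F] E) = ((1 : D) ⊗ₜ[F] e) * (v : D ⊗[F] E) :=
    fun e => hspan _ (hcl e _ v.2)
  choose g hgspec using hg
  have gsmul : ∀ e : E, (g e) • (v : D ⊗[F] E) = ((1 : D) ⊗ₜ[F] e) * (v : D ⊗[F] E) := hgspec
  have g_one : g 1 = 1 := by
    apply hinj
    rw [gsmul, one_smul]
    rw [show ((1:D) ⊗ₜ[F] (1:E)) = (1 : D ⊗[F] E) from rfl, one_mul]
  have g_add : ∀ e₁ e₂ : E, g (e₁ + e₂) = g e₁ + g e₂ := by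
    intro e₁ e₂
    apply hinj
    rw [gsmul, add_smul, gsmul, gsmul, TensorProduct.tmul_add, add_mul]
  have g_zero : g 0 = 0 := by
    apply hinj
    rw [gsmul, zero_smul, TensorProduct.tmul_zero, zero_mul]
  have g_mul_rev : ∀ e₁ e₂ : E, g (e₁ * e₂) = g e₂ * g e₁ := by
    intro e₁ e₂
    apply hinj
    rw [gsmul, mul_smul, gsmul]
    have : ((1:D) ⊗ₜ[F] (e₁ * e₂)) = ((1:D) ⊗ₜ[F] e₁) * ((1:D) ⊗ₜ[F] e₂) := by
      rw [Algebra.TensorProduct.tmul_mul_tmul, one_mul]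
    rw [this, mul_assoc, ← gsmul e₂, hcomm]
  have g_mul : ∀ e₁ e₂ : E, g (e₁ * e₂) = g e₁ * g e₂ := by
    intro e₁ e₂
    rw [mul_comm e₁ e₂, g_mul_rev]
  have g_alg : ∀ c : F, g (algebraMap F E c) = algebraMap F D c := by
    intro c
    apply hinj
    rw [gsmul]
    have h1 : ((1:D) ⊗ₜ[F] algebraMap F E c) = (algebraMap F D c) ⊗ₜ[F] (1:E) := by
      rw [Algebra.algebraMap_eq_smul_one, Algebra.algebraMap_eq_smul_one,
        TensorProduct.tmul_smul, TensorProduct.smul_tmul']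
    rw [h1, ← hsmul]
  exact hemb.false
    { toFun := g
      map_one' := g_one
      map_mul' := g_mul
      map_zero' := g_zero
      map_add' := g_add
      commutes' := g_alg }
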